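/- arXiv:2511.03024 — 3 statements merged into one kernel-verified Lean document; each statement's English description precedes it below -/
import Mathlib

section
/- Let N be a lattice of rank n and Σ a complete rational polyhedral fan in N⊗ℚ. Fix a ray ρ of Σ with primitive generator p_ρ. Then the set 𝔯'_ρ = { m ∈ M⊗ℚ : ⟨p_ρ, m⟩ = −1 and ⟨p_ρ', m⟩ ≥ 0 for all rays ρ' ≠ ρ of Σ } is bounded. -/
open Matrix

/-- The convex cone of nonnegative rational combinations of a finite set of vectors. -/
def coneOf {n : ℕ} (S : Finset (Fin n → ℚ)) : Set (Fin n → ℚ) :=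
  { x | ∃ c : (Fin n → ℚ) → ℚ, (∀ v, 0 ≤ c v) ∧ x = ∑ v ∈ S, c v • v }

/-- `F` is a face of the cone `σ` cut out by a supporting linear functional. -/
def IsFaceOf {n : ℕ} (F σ : Set (Fin n → ℚ)) : Prop :=
  ∃ m : Fin n → ℚ, (∀ x ∈ σ, 0 ≤ m ⬝ᵥ x) ∧ F = {x ∈ σ | m ⬝ᵥ x = 0}

/-- A rational polyhedral fan in `ℚ^n`, presented by the (primitive) generators of its
rays together with its collection of cones. -/
structure Fan (n : ℕ) where
  rays : Finset (Fin n → ℚ)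
  cones : Set (Set (Fin n → ℚ))
  finite_cones : cones.Finite
  polyhedral : ∀ σ ∈ cones, ∃ S : Finset (Fin n → ℚ),
    ↑S ⊆ (rays : Set (Fin n → ℚ)) ∧ σ = coneOf S
  pointed : ∀ σ ∈ cones, σ ∩ (-σ) ⊆ {0}
  inter_face : ∀ σ ∈ cones, ∀ τ ∈ cones, IsFaceOf (σ ∩ τ) σ
  ray_mem : ∀ p ∈ rays, coneOf {p} ∈ cones

/-- A fan is complete if its cones cover `ℚ^n`. -/
def Fan.IsComplete {n : ℕ} (F : Fan n) : Prop := ⋃ σ ∈ F.cones, σ = Set.univ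

/-- for a complete fan and a fixed ray generator `p`, the set
`𝔯'_ρ = { m : ⟨p, m⟩ = -1 and ⟨q, m⟩ ≥ 0 for all other ray generators q }` is bounded. -/
theorem demazure_root_polyhedron_bounded {n : ℕ} (F : Fan n) (hF : F.IsComplete)
    (p : Fin n → ℚ) (hp : p ∈ F.rays) :
    ∃ C : ℚ, ∀ m : Fin n → ℚ,
      (p ⬝ᵥ m = -1 ∧ ∀ q ∈ F.rays, q ≠ p → 0 ≤ q ⬝ᵥ m) → ∀ i, |m i| ≤ C := by
  have key : ∀ x : Fin n → ℚ, ∃ b : ℚ, 0 ≤ b ∧ ∀ m : Fin n → ℚ,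
      (p ⬝ᵥ m = -1 ∧ ∀ q ∈ F.rays, q ≠ p → 0 ≤ q ⬝ᵥ m) → -b ≤ x ⬝ᵥ m := by
    intro x
    have hx : x ∈ ⋃ σ ∈ F.cones, σ := by rw [hF]; trivial
    simp only [Set.mem_iUnion] at hx
    obtain ⟨σ, hσ, hxσ⟩ := hx
    obtain ⟨S, hS, rfl⟩ := F.polyhedral σ hσ
    obtain ⟨c, hc, hxc⟩ := hxσ
    refine ⟨c p, hc p, fun m ⟨hm1, hm2⟩ => ?_⟩
    have hsum : (∑ v ∈ S, c v • v) ⬝ᵥ m = ∑ v ∈ S, (c v • v) ⬝ᵥ m := by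
      simp only [dotProduct, Finset.sum_apply, Finset.sum_mul, Pi.smul_apply]
      exact Finset.sum_comm
    rw [hxc, hsum]
    have hterm : ∀ v ∈ S, (if v = p then -(c p) else 0) ≤ (c v • v) ⬝ᵥ m := by
      intro v hv
      rw [smul_dotProduct]
      by_cases hvp : v = p
      · subst hvp; simp [hm1]
      · simp only [hvp, if_false, smul_eq_mul]
        exact mul_nonneg (hc v) (hm2 v (hS hv) hvp)
    calc -(c p) ≤ ∑ v ∈ S, (if v = p then -(c p) else 0) := by
          rw [Finset.sum_ite_eq' S p (fun _ => -(c p))]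
          split
          · exact le_refl _
          · linarith [hc p]
      _ ≤ _ := Finset.sum_le_sum hterm
  choose b hb0 hb using key
  refine ⟨∑ i : Fin n, (b (Pi.single i 1) + b (-(Pi.single i 1))), fun m hm i => ?_⟩
  have h1 : -(b (Pi.single i 1)) ≤ m i := by
    have := hb (Pi.single i 1) m hm
    rwa [single_dotProduct, one_mul] at this
  have h2 : m i ≤ b (-(Pi.single i 1)) := by
    have := hb (-(Pi.single i 1)) m hm
    rw [neg_dotProduct, single_dotProduct, one_mul] at this
    linarith
  have hC : ∀ j, b (Pi.single j 1) + b (-(Pi.single j 1)) ≤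
      ∑ k : Fin n, (b (Pi.single k 1) + b (-(Pi.single k 1))) :=
    fun j => Finset.single_le_sum
      (f := fun k => b (Pi.single k 1) + b (-(Pi.single k 1)))
      (fun k _ => add_nonneg (hb0 _) (hb0 _)) (Finset.mem_univ j)
  rw [abs_le]
  constructor
  · have := hC i; linarith [hb0 (-(Pi.single i 1))]
  · have := hC i; linarith [hb0 (Pi.single i 1)]
end

section
/- Let Σ be a complete fan in N_ℚ ≅ ℚ^n. Then the set of Demazure roots of Σ, namely 𝔯 = ⊔_{ρ ∈ Σ(1)} { m ∈ M : ⟨p_ρ, m⟩ = −1 and ⟨p_ρ', m⟩ ≥ 0 for all ρ' ∈ Σ(1) \ {ρ} }, is finite. -/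
open Matrix

/-- the set of Demazure roots of a complete fan is finite. -/
theorem demazureRoots_finite {n : ℕ} (F : Fan n) (hF : F.IsComplete) :
    { m : Fin n → ℤ | ∃ p ∈ F.rays,
        p ⬝ᵥ (fun i => (m i : ℚ)) = -1 ∧
        ∀ q ∈ F.rays, q ≠ p → 0 ≤ q ⬝ᵥ (fun i => (m i : ℚ)) }.Finite := by

  classical
  -- Every vector is a nonnegative combination of rays.
  have rep : ∀ x : Fin n → ℚ, ∃ S : Finset (Fin n → ℚ), ∃ c : (Fin n → ℚ) → ℚ,
      ↑S ⊆ (F.rays : Set (Fin n → ℚ)) ∧ (∀ v, 0 ≤ c v) ∧ x = ∑ v ∈ S, c v • v := by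
    intro x
    have hx : x ∈ ⋃ σ ∈ F.cones, σ := by rw [hF]; trivial
    simp only [Set.mem_iUnion] at hx
    obtain ⟨σ, hσ, hxσ⟩ := hx
    obtain ⟨S, hS, rfl⟩ := F.polyhedral σ hσ
    obtain ⟨c, hc, hxc⟩ := hxσ
    exact ⟨S, c, hS, hc, hxc⟩
  choose S c hS hc hx using rep
  set R := { m : Fin n → ℤ | ∃ p ∈ F.rays,
        p ⬝ᵥ (fun i => (m i : ℚ)) = -1 ∧
        ∀ q ∈ F.rays, q ≠ p → 0 ≤ q ⬝ᵥ (fun i => (m i : ℚ)) } with hR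
  -- For any root m and any x, the pairing x ⬝ᵥ m is bounded below.
  have key : ∀ m ∈ R, ∀ x : Fin n → ℚ,
      -(∑ v ∈ S x, c x v) ≤ x ⬝ᵥ (fun i => (m i : ℚ)) := by
    intro m hm x
    obtain ⟨p, hp, hpm, hqm⟩ := hm
    have hray : ∀ v ∈ S x, -1 ≤ v ⬝ᵥ (fun i => (m i : ℚ)) := by
      intro v hv
      by_cases hvp : v = p
      · rw [hvp, hpm]
      · have := hqm v (hS x hv) hvp
        linarith
    calc -(∑ v ∈ S x, c x v) = ∑ v ∈ S x, c x v * (-1) := by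
          rw [← Finset.sum_neg_distrib]
          exact Finset.sum_congr rfl fun v _ => by ring
      _ ≤ ∑ v ∈ S x, c x v * (v ⬝ᵥ (fun i => (m i : ℚ))) := by
          refine Finset.sum_le_sum fun v hv => ?_
          exact mul_le_mul_of_nonneg_left (hray v hv) (hc x v)
      _ = x ⬝ᵥ (fun i => (m i : ℚ)) := by
          conv_rhs => rw [hx x]
          simp only [dotProduct, Finset.sum_apply, Pi.smul_apply, smul_eq_mul,
            Finset.sum_mul, Finset.mul_sum, mul_assoc]
          rw [Finset.sum_comm]
  -- Each coordinate of a root is bounded.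
  have single_dot : ∀ (i : Fin n) (w : Fin n → ℚ), (Pi.single i (1:ℚ)) ⬝ᵥ w = w i := by
    intro i w
    simp [dotProduct, Pi.single_apply, Finset.sum_ite_eq']
  have bound : ∀ m ∈ R, ∀ i : Fin n,
      -(∑ v ∈ S (Pi.single i 1), c (Pi.single i 1) v) ≤ (m i : ℚ) ∧
      (m i : ℚ) ≤ (∑ v ∈ S (-(Pi.single i 1)), c (-(Pi.single i 1)) v) := by
    intro m hm i
    constructor
    · have := key m hm (Pi.single i 1)
      rwa [single_dot] at this
    · have := key m hm (-(Pi.single i 1))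
      rw [neg_dotProduct, single_dot] at this
      linarith
  -- Hence R is contained in a finite box.
  refine Set.Finite.subset (Set.Finite.pi (fun i : Fin n =>
    Set.finite_Icc (⌈-(∑ v ∈ S (Pi.single i 1), c (Pi.single i 1) v)⌉)
      (⌊(∑ v ∈ S (-(Pi.single i 1)), c (-(Pi.single i 1)) v)⌋))) ?_
  intro m hm
  intro i _
  obtain ⟨h1, h2⟩ := bound m hm i
  exact ⟨Int.ceil_le.mpr h1, Int.le_floor.mpr h2⟩
end

section
/- Let Σ be a complete fan in N_ℚ ≅ ℚ^n with ray generators p_1, …, p_n, p'_1, …, p'_k such that B = {p_1, …, p_n} is a basis of N and each p'_j lies in the negative octant of B (i.e., p'_j = Σ a_i p_i with all a_i ≤ 0). Then Cone(p_1, …, p_n) is a maximal cone of Σ, i.e., the rays ρ_1, …, ρ_n generated by p_1, …, p_n are exactly the extremal rays of some maximal cone σ ∈ Σ. -/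
open Matrix

section Aux

variable {n : ℕ}

lemma coneOf_zero_mem (S : Finset (Fin n → ℚ)) : (0 : Fin n → ℚ) ∈ coneOf S :=
  ⟨0, fun _ => le_refl 0, by simp⟩

lemma coneOf_mem_self {S : Finset (Fin n → ℚ)} {v : Fin n → ℚ} (h : v ∈ S) :
    v ∈ coneOf S := by
  classical
  refine ⟨fun w => if w = v then 1 else 0, ?_, ?_⟩
  · intro w; dsimp only; split <;> norm_num
  · rw [Finset.sum_eq_single v]
    · simp
    · intro w _ hne; simp [hne]
    · intro h'; exact absurd h h'

lemma coneOf_add_mem {S : Finset (Fin n → ℚ)} {x y : Fin n → ℚ}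
    (hx : x ∈ coneOf S) (hy : y ∈ coneOf S) : x + y ∈ coneOf S := by
  obtain ⟨c, hc, rfl⟩ := hx; obtain ⟨d, hd, rfl⟩ := hy
  refine ⟨c + d, fun v => add_nonneg (hc v) (hd v), ?_⟩
  rw [← Finset.sum_add_distrib]
  refine Finset.sum_congr rfl fun v _ => ?_
  simp [add_smul]

lemma coneOf_smul_mem {S : Finset (Fin n → ℚ)} {x : Fin n → ℚ} {t : ℚ}
    (ht : 0 ≤ t) (hx : x ∈ coneOf S) : t • x ∈ coneOf S := by
  obtain ⟨c, hc, rfl⟩ := hx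
  refine ⟨t • c, fun v => mul_nonneg ht (hc v), ?_⟩
  rw [Finset.smul_sum]
  refine Finset.sum_congr rfl fun v _ => ?_
  simp [smul_smul]

lemma coneOf_sum_mem {S : Finset (Fin n → ℚ)} {ι : Type*} (t : Finset ι)
    (f : ι → (Fin n → ℚ)) (h : ∀ i ∈ t, f i ∈ coneOf S) :
    ∑ i ∈ t, f i ∈ coneOf S :=
  Finset.sum_induction f (· ∈ coneOf S) (fun _ _ => coneOf_add_mem)
    (coneOf_zero_mem S) h

lemma coneOf_subset {S T : Finset (Fin n → ℚ)} (h : ∀ v ∈ T, v ∈ coneOf S) :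
    coneOf T ⊆ coneOf S := by
  rintro x ⟨c, hc, rfl⟩
  exact coneOf_sum_mem T _ fun v hv => coneOf_smul_mem (hc v) (h v hv)

lemma dot_sum_smul (m : Fin n → ℚ) (a : Fin n → ℚ) (v : Fin n → (Fin n → ℚ)) :
    m ⬝ᵥ (∑ j, a j • v j) = ∑ j, a j * (m ⬝ᵥ v j) := by
  simp only [dotProduct, Finset.sum_apply, Pi.smul_apply, smul_eq_mul, Finset.mul_sum]
  rw [Finset.sum_comm]
  refine Finset.sum_congr rfl fun j _ => Finset.sum_congr rfl fun k _ => by ring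

lemma dot_finset_sum_smul (m : Fin n → ℚ) (S : Finset (Fin n → ℚ)) (c : (Fin n → ℚ) → ℚ) :
    m ⬝ᵥ (∑ v ∈ S, c v • v) = ∑ v ∈ S, c v * (m ⬝ᵥ v) := by
  simp only [dotProduct, Finset.sum_apply, Pi.smul_apply, smul_eq_mul, Finset.mul_sum]
  rw [Finset.sum_comm]
  refine Finset.sum_congr rfl fun j _ => Finset.sum_congr rfl fun k _ => by ring

end Aux

/-- if the ray generators of a complete fan consist of a lattice basis
`p 0, …, p (n-1)` together with vectors lying in the negative octant of that basis,
then `Cone(p 0, …, p (n-1))` is a maximal cone of the fan. -/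
theorem coneOf_basis_isMaxCone {n : ℕ} (F : Fan n) (hF : F.IsComplete)
    (p : Fin n → (Fin n → ℚ)) (hmem : ∀ i, p i ∈ F.rays)
    (hbasis : ∃ b : Module.Basis (Fin n) ℤ (Fin n → ℤ), ∀ i j, ((b i) j : ℚ) = p i j)
    (hneg : ∀ q ∈ F.rays, q ∉ Set.range p →
      ∃ a : Fin n → ℚ, (∀ i, a i ≤ 0) ∧ q = ∑ i, a i • p i) :
    coneOf (Finset.image p Finset.univ) ∈ F.cones ∧
      ∀ τ ∈ F.cones, coneOf (Finset.image p Finset.univ) ⊆ τ →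
        coneOf (Finset.image p Finset.univ) = τ := by
  classical
  set P : Finset (Fin n → ℚ) := Finset.image p Finset.univ with hP
  obtain ⟨b, hb⟩ := hbasis
  -- The matrix whose columns are the `p j` is invertible over ℚ.
  set A : Matrix (Fin n) (Fin n) ℚ := Matrix.of fun i j => p j i with hA
  have hA0 : A = ((Pi.basisFun ℤ (Fin n)).toMatrix b).map (Int.cast : ℤ → ℚ) := by
    ext i j
    simp [hA, Module.Basis.toMatrix_apply, Pi.basisFun_repr, hb]
  haveI hinv0 : Invertible ((Pi.basisFun ℤ (Fin n)).toMatrix b) :=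
    (Pi.basisFun ℤ (Fin n)).invertibleToMatrix b
  haveI hinv : Invertible A := by
    rw [hA0]
    have : (Int.castRingHom ℚ).mapMatrix ((Pi.basisFun ℤ (Fin n)).toMatrix b)
        = ((Pi.basisFun ℤ (Fin n)).toMatrix b).map (Int.cast : ℤ → ℚ) := rfl
    rw [← this]
    exact Invertible.map ((Int.castRingHom ℚ).mapMatrix) _
  set M : Matrix (Fin n) (Fin n) ℚ := ⅟A with hM
  -- dual functionals
  have hmp : ∀ i j, (M i) ⬝ᵥ p j = if i = j then 1 else 0 := by
    intro i j
    have h1 : (M * A) i j = (1 : Matrix (Fin n) (Fin n) ℚ) i j := by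
      rw [hM, invOf_mul_self]
    simpa [Matrix.mul_apply, Matrix.one_apply, dotProduct, hA] using h1
  have hcoord : ∀ (i : Fin n) (a : Fin n → ℚ), (M i) ⬝ᵥ (∑ j, a j • p j) = a i := by
    intro i a
    rw [dot_sum_smul]
    rw [Finset.sum_eq_single i]
    · simp [hmp]
    · intro j _ hne; simp [hmp, (Ne.symm hne)]
    · simp
  -- Every element of a fan cone containing `coneOf P` lies in `coneOf P`.
  have key2 : ∀ τ ∈ F.cones, coneOf P ⊆ τ → coneOf P = τ := by
    intro τ hτ hsub
    obtain ⟨T, hT, rfl⟩ := F.polyhedral τ hτ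
    refine Set.Subset.antisymm hsub (coneOf_subset ?_)
    intro v hv
    by_cases hvr : v ∈ Set.range p
    · obtain ⟨i, rfl⟩ := hvr
      exact coneOf_mem_self (by simp [hP])
    · obtain ⟨a, ha, hva⟩ := hneg v (hT hv) hvr
      have hnegmem : -v ∈ coneOf P := by
        have : -v = ∑ i, (-a i) • p i := by
          rw [hva, ← Finset.sum_neg_distrib]
          exact Finset.sum_congr rfl fun i _ => (neg_smul _ _).symm
        rw [this]
        exact coneOf_sum_mem _ _ fun i _ =>
          coneOf_smul_mem (neg_nonneg.2 (ha i)) (coneOf_mem_self (by simp [hP]))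
      have hv0 : v = 0 := by
        have := F.pointed _ hτ ⟨coneOf_mem_self hv, by
          simpa [Set.mem_neg] using hsub hnegmem⟩
        simpa using this
      rw [hv0]; exact coneOf_zero_mem P
  -- Find the cone of the fan containing the interior point `∑ i, p i`.
  have hx : (∑ i, p i) ∈ ⋃ σ ∈ F.cones, σ := by rw [hF]; trivial
  obtain ⟨σ, hσ, hxσ⟩ := Set.mem_iUnion₂.1 hx
  obtain ⟨S, hS, rfl⟩ := F.polyhedral σ hσ
  obtain ⟨c, hc, hxc⟩ := hxσ
  -- each `p i` belongs to `S`
  have hpS : ∀ i, p i ∈ S := by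
    intro i
    by_contra hpi
    have hone : (M i) ⬝ᵥ (∑ j, p j) = 1 := by
      have := hcoord i (fun _ => 1)
      simpa using this
    have hle : (M i) ⬝ᵥ (∑ j, p j) ≤ 0 := by
      rw [hxc, dot_finset_sum_smul]
      refine Finset.sum_nonpos fun v hv => ?_
      have hvray : v ∈ F.rays := hS hv
      by_cases hvr : v ∈ Set.range p
      · obtain ⟨j, rfl⟩ := hvr
        have hji : i ≠ j := fun h => hpi (h ▸ hv)
        rw [hmp]
        simp [hji]
      · obtain ⟨a, ha, hva⟩ := hneg v hvray hvr
        have hdv : (M i) ⬝ᵥ v = a i := by rw [hva, hcoord]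
        rw [hdv]
        exact mul_nonpos_of_nonneg_of_nonpos (hc v) (ha i)
    linarith
  have hsub : coneOf P ⊆ coneOf S := by
    refine coneOf_subset ?_
    intro v hv
    rw [hP, Finset.mem_image] at hv
    obtain ⟨i, _, rfl⟩ := hv
    exact coneOf_mem_self (hpS i)
  have heq : coneOf P = coneOf S := key2 _ hσ hsub
  exact ⟨heq ▸ hσ, key2⟩
end
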